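/- Let Λ be a finite symmetric subset of S^1 ∩ Q^2 (i.e., ξ ∈ Λ implies −ξ ∈ Λ) such that λΛ ⊂ Z^2 for some positive integer λ. For coefficients a_ξ ∈ C with conj(a_ξ) = a_{−ξ}, define W(x) = Σ_{ξ∈Λ} a_ξ i ξ^⊥ e^{i λ ξ·x} and Ψ(x) = Σ_{ξ∈Λ} a_ξ e^{i λ ξ·x}. Then W and Ψ are real-valued, W = λ^{-1}∇^⊥Ψ (equivalently W is the perpendicular gradient of a stream function), div W = 0, and div(W ⊗ W) = ∇(|W|²/2 + Ψ²/2). -/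

import Mathlib

open MeasureTheory Real

noncomputable section

namespace Stmt2Aux

def phaseL (c₁ c₂ : ℂ) : (ℝ × ℝ) →L[ℝ] ℂ :=
  c₁ • (Complex.ofRealCLM.comp (ContinuousLinearMap.fst ℝ ℝ ℝ)) +
  c₂ • (Complex.ofRealCLM.comp (ContinuousLinearMap.snd ℝ ℝ ℝ))

@[simp] lemma phaseL_apply (c₁ c₂ : ℂ) (v : ℝ × ℝ) :
    phaseL c₁ c₂ v = c₁ * v.1 + c₂ * v.2 := by
  simp [phaseL, smul_eq_mul]

lemma hasFDerivAt_exp (l : ℂ) (ξ x : ℝ × ℝ) :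
    HasFDerivAt (fun y : ℝ × ℝ => Complex.exp (Complex.I * l * (ξ.1 * y.1 + ξ.2 * y.2)))
      (Complex.exp (Complex.I * l * (ξ.1 * x.1 + ξ.2 * x.2)) •
        phaseL (Complex.I * l * ξ.1) (Complex.I * l * ξ.2)) x := by
  have h1 : (fun y : ℝ × ℝ => (Complex.I * l * (ξ.1 * y.1 + ξ.2 * y.2) : ℂ))
      = fun y => phaseL (Complex.I * l * ξ.1) (Complex.I * l * ξ.2) y := by
    funext y; rw [phaseL_apply]; ring
  have h2 : HasFDerivAt (fun y : ℝ × ℝ => (Complex.I * l * (ξ.1 * y.1 + ξ.2 * y.2) : ℂ))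
      (phaseL (Complex.I * l * ξ.1) (Complex.I * l * ξ.2)) x := by
    rw [h1]; exact (phaseL _ _).hasFDerivAt
  simpa using h2.cexp

lemma sum_sym_eq (Λ : Finset (ℝ × ℝ)) (f g : (ℝ × ℝ) → (ℝ × ℝ) → ℂ)
    (h : ∀ ξ ∈ Λ, ∀ η ∈ Λ, f ξ η + f η ξ = g ξ η + g η ξ) :
    (∑ ξ ∈ Λ, ∑ η ∈ Λ, f ξ η) = ∑ ξ ∈ Λ, ∑ η ∈ Λ, g ξ η := by
  have h2 : (∑ ξ ∈ Λ, ∑ η ∈ Λ, (f ξ η + f η ξ)) = ∑ ξ ∈ Λ, ∑ η ∈ Λ, (g ξ η + g η ξ) :=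
    Finset.sum_congr rfl fun ξ hξ => Finset.sum_congr rfl fun η hη => h ξ hξ η hη
  simp only [Finset.sum_add_distrib] at h2
  rw [Finset.sum_comm (f := fun ξ η => f η ξ), Finset.sum_comm (f := fun ξ η => g η ξ)] at h2
  linear_combination h2 / 2

end Stmt2Aux

/-- Stationary plane-wave solutions of the 2D Euler equations. -/
theorem stmt2 (lam : ℕ) (hlam : 0 < lam) (Λ : Finset (ℝ × ℝ))
    (hsym : ∀ ξ ∈ Λ, -ξ ∈ Λ)
    (hunit : ∀ ξ ∈ Λ, ξ.1 ^ 2 + ξ.2 ^ 2 = 1)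
    (hrat : ∀ ξ ∈ Λ, ∃ m n : ℤ, (lam : ℝ) * ξ.1 = m ∧ (lam : ℝ) * ξ.2 = n)
    (a : ℝ × ℝ → ℂ) (ha : ∀ ξ ∈ Λ, starRingEnd ℂ (a ξ) = a (-ξ))
    (W₁ W₂ Ψ : ℝ × ℝ → ℂ)
    (hW₁ : W₁ = fun x => ∑ ξ ∈ Λ,
      a ξ * Complex.I * (-ξ.2 : ℝ) * Complex.exp (Complex.I * lam * (ξ.1 * x.1 + ξ.2 * x.2)))
    (hW₂ : W₂ = fun x => ∑ ξ ∈ Λ,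
      a ξ * Complex.I * (ξ.1 : ℝ) * Complex.exp (Complex.I * lam * (ξ.1 * x.1 + ξ.2 * x.2)))
    (hΨ : Ψ = fun x => ∑ ξ ∈ Λ,
      a ξ * Complex.exp (Complex.I * lam * (ξ.1 * x.1 + ξ.2 * x.2))) :
    -- W and Ψ are real-valued
    (∀ x : ℝ × ℝ, (W₁ x).im = 0 ∧ (W₂ x).im = 0 ∧ (Ψ x).im = 0) ∧
    -- W = λ⁻¹ ∇^⊥ Ψ
    (∀ x : ℝ × ℝ, W₁ x = -(lam : ℂ)⁻¹ * fderiv ℝ Ψ x (0, 1)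
        ∧ W₂ x = (lam : ℂ)⁻¹ * fderiv ℝ Ψ x (1, 0)) ∧
    -- div W = 0
    (∀ x : ℝ × ℝ, fderiv ℝ W₁ x (1, 0) + fderiv ℝ W₂ x (0, 1) = 0) ∧
    -- div (W ⊗ W) = ∇(|W|²/2 + Ψ²/2)
    (∀ x : ℝ × ℝ,
      (fderiv ℝ (fun y => W₁ y * W₁ y) x (1, 0) + fderiv ℝ (fun y => W₁ y * W₂ y) x (0, 1)
        = fderiv ℝ (fun y => (W₁ y ^ 2 + W₂ y ^ 2) / 2 + Ψ y ^ 2 / 2) x (1, 0)) ∧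
      (fderiv ℝ (fun y => W₂ y * W₁ y) x (1, 0) + fderiv ℝ (fun y => W₂ y * W₂ y) x (0, 1)
        = fderiv ℝ (fun y => (W₁ y ^ 2 + W₂ y ^ 2) / 2 + Ψ y ^ 2 / 2) x (0, 1))) := by
  subst hW₁ hW₂ hΨ
  have hlam0 : ((lam : ℕ) : ℂ) ≠ 0 := Nat.cast_ne_zero.2 hlam.ne'
  have hHD : ∀ (c : (ℝ × ℝ) → ℂ) (x : ℝ × ℝ),
      HasFDerivAt (fun y : ℝ × ℝ => ∑ ξ ∈ Λ,
          c ξ * Complex.exp (Complex.I * lam * (ξ.1 * y.1 + ξ.2 * y.2)))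
        (∑ ξ ∈ Λ, c ξ • (Complex.exp (Complex.I * lam * (ξ.1 * x.1 + ξ.2 * x.2)) •
          Stmt2Aux.phaseL (Complex.I * lam * ξ.1) (Complex.I * lam * ξ.2))) x := by
    intro c x
    exact HasFDerivAt.fun_sum fun ξ _ => (Stmt2Aux.hasFDerivAt_exp (lam : ℂ) ξ x).const_mul (c ξ)
  have hDapp : ∀ (c : (ℝ × ℝ) → ℂ) (x v : ℝ × ℝ),
      fderiv ℝ (fun y : ℝ × ℝ => ∑ ξ ∈ Λ,
          c ξ * Complex.exp (Complex.I * lam * (ξ.1 * y.1 + ξ.2 * y.2))) x v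
        = ∑ ξ ∈ Λ, c ξ * (Complex.exp (Complex.I * lam * (ξ.1 * x.1 + ξ.2 * x.2)) *
            (Complex.I * lam * ξ.1 * v.1 + Complex.I * lam * ξ.2 * v.2)) := by
    intro c x v
    rw [(hHD c x).fderiv]
    simp [ContinuousLinearMap.sum_apply, smul_eq_mul]
  have hconj : ∀ (c : (ℝ × ℝ) → ℂ), (∀ ξ ∈ Λ, starRingEnd ℂ (c ξ) = c (-ξ)) →
      ∀ x : ℝ × ℝ, ((∑ ξ ∈ Λ,
        c ξ * Complex.exp (Complex.I * lam * (ξ.1 * x.1 + ξ.2 * x.2))).im = 0) := by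
    intro c hc x
    rw [← Complex.conj_eq_iff_im, map_sum]
    refine Finset.sum_bij' (fun ξ _ => -ξ) (fun ξ _ => -ξ) (fun ξ h => hsym ξ h)
      (fun ξ h => hsym ξ h) (by simp) (by simp) ?_
    intro ξ hξ
    rw [map_mul, hc ξ hξ, ← Complex.exp_conj]
    have : (starRingEnd ℂ) (Complex.I * lam * (ξ.1 * x.1 + ξ.2 * x.2))
        = Complex.I * lam * ((-ξ).1 * x.1 + (-ξ).2 * x.2) := by
      simp [map_mul, map_add, Complex.conj_I, Complex.conj_ofReal]
      push_cast
      ring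
    rw [this]
  have hDmul : ∀ (c d : (ℝ × ℝ) → ℂ) (x v : ℝ × ℝ),
      fderiv ℝ (fun y : ℝ × ℝ =>
          (∑ ξ ∈ Λ, c ξ * Complex.exp (Complex.I * lam * (ξ.1 * y.1 + ξ.2 * y.2))) *
          (∑ ξ ∈ Λ, d ξ * Complex.exp (Complex.I * lam * (ξ.1 * y.1 + ξ.2 * y.2)))) x v
        = (∑ ξ ∈ Λ, c ξ * Complex.exp (Complex.I * lam * (ξ.1 * x.1 + ξ.2 * x.2))) *
            (∑ ξ ∈ Λ, d ξ * (Complex.exp (Complex.I * lam * (ξ.1 * x.1 + ξ.2 * x.2)) *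
              (Complex.I * lam * ξ.1 * v.1 + Complex.I * lam * ξ.2 * v.2)))
          + (∑ ξ ∈ Λ, d ξ * Complex.exp (Complex.I * lam * (ξ.1 * x.1 + ξ.2 * x.2))) *
            (∑ ξ ∈ Λ, c ξ * (Complex.exp (Complex.I * lam * (ξ.1 * x.1 + ξ.2 * x.2)) *
              (Complex.I * lam * ξ.1 * v.1 + Complex.I * lam * ξ.2 * v.2))) := by
    intro c d x v
    have H2 : HasFDerivAt (fun y : ℝ × ℝ =>
        (∑ ξ ∈ Λ, c ξ * Complex.exp (Complex.I * lam * (ξ.1 * y.1 + ξ.2 * y.2))) *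
        (∑ ξ ∈ Λ, d ξ * Complex.exp (Complex.I * lam * (ξ.1 * y.1 + ξ.2 * y.2)))) _ x :=
      (hHD c x).mul (hHD d x)
    rw [H2.fderiv]
    simp [ContinuousLinearMap.sum_apply, smul_eq_mul]
  have hDquad : ∀ (c d g : (ℝ × ℝ) → ℂ) (x v : ℝ × ℝ),
      fderiv ℝ (fun y : ℝ × ℝ =>
          ((∑ ξ ∈ Λ, c ξ * Complex.exp (Complex.I * lam * (ξ.1 * y.1 + ξ.2 * y.2))) ^ 2 +
           (∑ ξ ∈ Λ, d ξ * Complex.exp (Complex.I * lam * (ξ.1 * y.1 + ξ.2 * y.2))) ^ 2) / 2 +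
          (∑ ξ ∈ Λ, g ξ * Complex.exp (Complex.I * lam * (ξ.1 * y.1 + ξ.2 * y.2))) ^ 2 / 2) x v
        = (∑ ξ ∈ Λ, c ξ * Complex.exp (Complex.I * lam * (ξ.1 * x.1 + ξ.2 * x.2))) *
            (∑ ξ ∈ Λ, c ξ * (Complex.exp (Complex.I * lam * (ξ.1 * x.1 + ξ.2 * x.2)) *
              (Complex.I * lam * ξ.1 * v.1 + Complex.I * lam * ξ.2 * v.2)))
          + (∑ ξ ∈ Λ, d ξ * Complex.exp (Complex.I * lam * (ξ.1 * x.1 + ξ.2 * x.2))) *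
            (∑ ξ ∈ Λ, d ξ * (Complex.exp (Complex.I * lam * (ξ.1 * x.1 + ξ.2 * x.2)) *
              (Complex.I * lam * ξ.1 * v.1 + Complex.I * lam * ξ.2 * v.2)))
          + (∑ ξ ∈ Λ, g ξ * Complex.exp (Complex.I * lam * (ξ.1 * x.1 + ξ.2 * x.2))) *
            (∑ ξ ∈ Λ, g ξ * (Complex.exp (Complex.I * lam * (ξ.1 * x.1 + ξ.2 * x.2)) *
              (Complex.I * lam * ξ.1 * v.1 + Complex.I * lam * ξ.2 * v.2))) := by
    intro c d g x v
    have hF : (fun y : ℝ × ℝ =>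
          ((∑ ξ ∈ Λ, c ξ * Complex.exp (Complex.I * lam * (ξ.1 * y.1 + ξ.2 * y.2))) ^ 2 +
           (∑ ξ ∈ Λ, d ξ * Complex.exp (Complex.I * lam * (ξ.1 * y.1 + ξ.2 * y.2))) ^ 2) / 2 +
          (∑ ξ ∈ Λ, g ξ * Complex.exp (Complex.I * lam * (ξ.1 * y.1 + ξ.2 * y.2))) ^ 2 / 2)
        = (fun y : ℝ × ℝ =>
          (2⁻¹ : ℂ) * ((∑ ξ ∈ Λ, c ξ * Complex.exp (Complex.I * lam * (ξ.1 * y.1 + ξ.2 * y.2))) *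
            (∑ ξ ∈ Λ, c ξ * Complex.exp (Complex.I * lam * (ξ.1 * y.1 + ξ.2 * y.2)))) +
          ((2⁻¹ : ℂ) * ((∑ ξ ∈ Λ, d ξ * Complex.exp (Complex.I * lam * (ξ.1 * y.1 + ξ.2 * y.2))) *
            (∑ ξ ∈ Λ, d ξ * Complex.exp (Complex.I * lam * (ξ.1 * y.1 + ξ.2 * y.2)))) +
          (2⁻¹ : ℂ) * ((∑ ξ ∈ Λ, g ξ * Complex.exp (Complex.I * lam * (ξ.1 * y.1 + ξ.2 * y.2))) *
            (∑ ξ ∈ Λ, g ξ * Complex.exp (Complex.I * lam * (ξ.1 * y.1 + ξ.2 * y.2)))))) := by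
      funext y; ring
    rw [hF]
    have H2 : HasFDerivAt (fun y : ℝ × ℝ =>
          (2⁻¹ : ℂ) * ((∑ ξ ∈ Λ, c ξ * Complex.exp (Complex.I * lam * (ξ.1 * y.1 + ξ.2 * y.2))) *
            (∑ ξ ∈ Λ, c ξ * Complex.exp (Complex.I * lam * (ξ.1 * y.1 + ξ.2 * y.2)))) +
          ((2⁻¹ : ℂ) * ((∑ ξ ∈ Λ, d ξ * Complex.exp (Complex.I * lam * (ξ.1 * y.1 + ξ.2 * y.2))) *
            (∑ ξ ∈ Λ, d ξ * Complex.exp (Complex.I * lam * (ξ.1 * y.1 + ξ.2 * y.2)))) +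
          (2⁻¹ : ℂ) * ((∑ ξ ∈ Λ, g ξ * Complex.exp (Complex.I * lam * (ξ.1 * y.1 + ξ.2 * y.2))) *
            (∑ ξ ∈ Λ, g ξ * Complex.exp (Complex.I * lam * (ξ.1 * y.1 + ξ.2 * y.2)))))) _ x :=
      (((hHD c x).mul (hHD c x)).const_mul (2⁻¹ : ℂ)).add
        ((((hHD d x).mul (hHD d x)).const_mul (2⁻¹ : ℂ)).add
          (((hHD g x).mul (hHD g x)).const_mul (2⁻¹ : ℂ)))
    rw [H2.fderiv]
    simp only [ContinuousLinearMap.add_apply, ContinuousLinearMap.smul_apply,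
      ContinuousLinearMap.sum_apply, Stmt2Aux.phaseL_apply, smul_eq_mul]
    ring
  refine ⟨?_, ?_, ?_, ?_⟩
  · intro x
    refine ⟨hconj _ ?_ x, hconj _ ?_ x, hconj _ ?_ x⟩
    · intro ξ hξ
      rw [map_mul, map_mul, ha ξ hξ, Complex.conj_I]
      simp [Complex.conj_ofReal, Prod.snd_neg, Complex.ofReal_neg]
    · intro ξ hξ
      rw [map_mul, map_mul, ha ξ hξ, Complex.conj_I]
      simp [Complex.conj_ofReal, Prod.fst_neg, Complex.ofReal_neg]
    · intro ξ hξ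
      exact ha ξ hξ
  · intro x
    constructor
    · simp only [hDapp]
      rw [Finset.mul_sum]
      refine Finset.sum_congr rfl fun ξ _ => ?_
      push_cast
      field_simp
      ring
    · simp only [hDapp]
      rw [Finset.mul_sum]
      refine Finset.sum_congr rfl fun ξ _ => ?_
      push_cast
      field_simp
      ring
  · intro x
    simp only [hDapp]
    rw [← Finset.sum_add_distrib]
    refine Finset.sum_eq_zero fun ξ _ => ?_
    push_cast
    ring
  · intro x
    have hE : ∀ ξ ∈ Λ, (ξ.1 : ℂ) ^ 2 + (ξ.2 : ℂ) ^ 2 = 1 := by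
      intro ξ hξ; exact_mod_cast hunit ξ hξ
    constructor
    · simp only [hDmul, hDquad]
      simp only [Finset.sum_mul_sum, ← Finset.sum_add_distrib]
      refine Stmt2Aux.sum_sym_eq Λ _ _ ?_
      intro ξ hξ η hη
      have hξu := hE ξ hξ
      have hηu := hE η hη
      set A : ℂ := a ξ * a η * (Complex.exp (Complex.I * lam * (ξ.1 * x.1 + ξ.2 * x.2)) *
        Complex.exp (Complex.I * lam * (η.1 * x.1 + η.2 * x.2))) with hA
      push_cast
      linear_combination
        (A * lam * Complex.I * η.1) * hξu + (A * lam * Complex.I * ξ.1) * hηu +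
        (-(Complex.I * A * lam * ((ξ.1:ℂ) * ((η.1:ℂ)^2 + (η.2:ℂ)^2) + (η.1:ℂ) * ((ξ.1:ℂ)^2 + (ξ.2:ℂ)^2)))) * Complex.I_sq
    · simp only [hDmul, hDquad]
      simp only [Finset.sum_mul_sum, ← Finset.sum_add_distrib]
      refine Stmt2Aux.sum_sym_eq Λ _ _ ?_
      intro ξ hξ η hη
      have hξu := hE ξ hξ
      have hηu := hE η hη
      set A : ℂ := a ξ * a η * (Complex.exp (Complex.I * lam * (ξ.1 * x.1 + ξ.2 * x.2)) *
        Complex.exp (Complex.I * lam * (η.1 * x.1 + η.2 * x.2))) with hA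
      push_cast
      linear_combination
        (A * lam * Complex.I * η.2) * hξu + (A * lam * Complex.I * ξ.2) * hηu +
        (-(Complex.I * A * lam * ((ξ.2:ℂ) * ((η.1:ℂ)^2 + (η.2:ℂ)^2) + (η.2:ℂ) * ((ξ.1:ℂ)^2 + (ξ.2:ℂ)^2)))) * Complex.I_sq
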